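/- With A, p, F_p as above and χ evaluative, if {ψ_i}_i are F_p-linearly independent elements of Hom_A(A/p, M) for a p-torsion A-module M that decomposes as M = ⊕_i im(ψ_i), then the Gauss-Thakur sums {g(χ,ψ_i)}_i are F_p-linearly independent in F_p⊗_F M (with F_p acting on the left tensor factor). -/

import Mathlib

open TensorProduct

attribute [local instance] Ideal.Quotient.field

set_option maxHeartbeats 2000000 in
/-- for an evaluative character `χ` and `F_p`-linearly independent
`ψ_i ∈ Hom_A(A/p, M)` with `M = ⊕_i im(ψ_i)`, the Gauss–Thakur sums `g(χ,ψ_i)` are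
`F_p`-linearly independent in `F_p ⊗_F M` (with `F_p = A/p` acting on the left factor). -/
theorem stmt13 (F : Type*) [Field F] [Fintype F]
    (A : Type*) [CommRing A] [Algebra F A]
    (p : Ideal A) [p.IsMaximal] [Fintype (A ⧸ p)] [DecidableEq (A ⧸ p)]
    (M : Type*) [AddCommGroup M] [Module A M] [Module F M] [IsScalarTower F A M]
    [Module (A ⧸ p) M] [IsScalarTower F (A ⧸ p) M] [SMulCommClass A (A ⧸ p) M]
    (hcompat : ∀ (a : A) (m : M), (Ideal.Quotient.mk p a) • m = a • m)
    (χ : A →ₐ[F] (A ⧸ p)) (hker : ∀ a : A, χ a = 0 ↔ a ∈ p)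
    (ι : Type*) (ψ : ι → ((A ⧸ p) →ₗ[A] M))
    (hindep : LinearIndependent (A ⧸ p) ψ)
    (hdirect : iSupIndep (fun i => LinearMap.range (ψ i)))
    (hspan : ⨆ i, LinearMap.range (ψ i) = ⊤) :
    LinearIndependent (A ⧸ p)
      (fun i => (- ∑ x : (A ⧸ p)ˣ,
          ((Ideal.Quotient.lift p (χ : A →+* A ⧸ p)
              (fun a ha => (hker a).mpr ha)) ((x : A ⧸ p)))⁻¹ ⊗ₜ[F] (ψ i) ((x : A ⧸ p)) :
        (A ⧸ p) ⊗[F] M)) := by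
  classical
  set σ : (A ⧸ p) →+* (A ⧸ p) :=
    Ideal.Quotient.lift p (χ : A →+* A ⧸ p) (fun a ha => (hker a).mpr ha) with hσ
  have hσinj : Function.Injective σ := RingHom.injective σ
  -- σ is F-linear
  have hσF : ∀ (c : F) (y : A ⧸ p), σ (c • y) = c • σ y := by
    intro c y
    have h1 : c • y = algebraMap F (A ⧸ p) c * y := (Algebra.smul_def c y)
    have h2 : algebraMap F (A ⧸ p) c = Ideal.Quotient.mk p (algebraMap F A c) := by
      rw [IsScalarTower.algebraMap_apply F A (A ⧸ p), Ideal.Quotient.algebraMap_eq]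
    have h3 : σ (Ideal.Quotient.mk p (algebraMap F A c)) = algebraMap F (A ⧸ p) c := by
      show (χ : A →+* A ⧸ p) (algebraMap F A c) = _
      exact χ.commutes c
    rw [h1, map_mul, h2, h3, ← Algebra.smul_def]
  -- semilinearity of ψ i over A ⧸ p
  have hψsmul : ∀ (i : ι) (a y : A ⧸ p), ψ i (a * y) = a • ψ i y := by
    intro i a y
    obtain ⟨a', rfl⟩ := Ideal.Quotient.mk_surjective a
    have h1 : (Ideal.Quotient.mk p a') * y = a' • y := by
      rw [Algebra.smul_def, Ideal.Quotient.algebraMap_eq]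
    rw [h1, map_smul, ← hcompat]
  -- each ψ i is injective
  have hψinj : ∀ j, Function.Injective (ψ j) := by
    intro j
    have hne : ψ j ≠ 0 := hindep.ne_zero j
    intro y z h
    by_contra hyz
    have hy : y - z ≠ 0 := sub_ne_zero.mpr hyz
    have h0 : ψ j (y - z) = 0 := by rw [map_sub, h, sub_self]
    apply hne
    refine LinearMap.ext fun w => ?_
    have hw : ψ j w = ψ j ((w * (y - z)⁻¹) * (y - z)) := by
      rw [mul_assoc, inv_mul_cancel₀ hy, mul_one]
    rw [LinearMap.zero_apply, hw, hψsmul, h0, smul_zero]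
  -- internal direct sum structure
  set N : ι → Submodule A M := fun i => LinearMap.range (ψ i) with hN
  have hInt : DirectSum.IsInternal N :=
    (DirectSum.isInternal_submodule_iff_iSupIndep_and_iSup_eq_top N).2 ⟨hdirect, hspan⟩
  set e : (DirectSum ι fun i => N i) ≃ₗ[A] M :=
    LinearEquiv.ofBijective (DirectSum.coeLinearMap N) hInt with he
  -- projections
  have key : ∀ j : ι, ∃ f : M →ₗ[A] (A ⧸ p),
      (∀ x, f (ψ j x) = x) ∧ (∀ i, i ≠ j → ∀ x, f (ψ i x) = 0) := by
    intro j
    set ej : (A ⧸ p) ≃ₗ[A] N j := LinearEquiv.ofInjective (ψ j) (hψinj j) with hej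
    refine ⟨(ej.symm : N j →ₗ[A] (A ⧸ p)) ∘ₗ
      ((DirectSum.component A ι (fun i => N i) j) ∘ₗ (e.symm : M →ₗ[A] DirectSum ι fun i => N i)),
      ?_, ?_⟩
    · intro x
      have hmem : ψ j x ∈ N j := LinearMap.mem_range_self _ x
      have h1 : e.symm (ψ j x) j = ⟨ψ j x, hmem⟩ :=
        hInt.ofBijective_coeLinearMap_of_mem hmem
      simp only [LinearMap.coe_comp, Function.comp_apply, LinearEquiv.coe_coe,
        ← DirectSum.apply_eq_component]
      rw [h1]
      have h2 : ej x = ⟨ψ j x, hmem⟩ := by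
        rw [hej]; rfl
      rw [← h2, LinearEquiv.symm_apply_apply]
    · intro i hij x
      have hmem : ψ i x ∈ N i := LinearMap.mem_range_self _ x
      have h1 : e.symm (ψ i x) j = 0 :=
        hInt.ofBijective_coeLinearMap_of_mem_ne hij hmem
      simp only [LinearMap.coe_comp, Function.comp_apply, LinearEquiv.coe_coe,
        ← DirectSum.apply_eq_component]
      rw [h1, map_zero]
  -- the evaluation maps on the tensor product
  have keyΦ : ∀ j : ι, ∃ Φ : ((A ⧸ p) ⊗[F] M) →ₗ[F] (A ⧸ p),
      (∀ (c x), Φ (c • x) = c * Φ x) ∧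
      (Φ (- ∑ x : (A ⧸ p)ˣ, (σ ((x : A ⧸ p)))⁻¹ ⊗ₜ[F] (ψ j) ((x : A ⧸ p))) = 1) ∧
      (∀ i, i ≠ j → Φ (- ∑ x : (A ⧸ p)ˣ, (σ ((x : A ⧸ p)))⁻¹ ⊗ₜ[F] (ψ i) ((x : A ⧸ p))) = 0) := by
    intro j
    obtain ⟨f, hfj, hfi⟩ := key j
    set σL : (A ⧸ p) →ₗ[F] (A ⧸ p) :=
      { toFun := σ, map_add' := fun a b => map_add σ a b, map_smul' := hσF } with hσL
    set L : M →ₗ[F] (A ⧸ p) := σL ∘ₗ (f.restrictScalars F) with hL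
    set B : (A ⧸ p) →ₗ[F] (M →ₗ[F] (A ⧸ p)) :=
      { toFun := fun a => a • L, map_add' := fun a b => add_smul a b L,
        map_smul' := fun c a => smul_assoc c a L } with hB
    set Φ : ((A ⧸ p) ⊗[F] M) →ₗ[F] (A ⧸ p) := TensorProduct.lift B with hΦ
    have hΦt : ∀ (a : A ⧸ p) (m : M), Φ (a ⊗ₜ[F] m) = a * σ (f m) := by
      intro a m
      rw [hΦ, TensorProduct.lift.tmul]
      show (a • L) m = a * σ (f m)
      rw [LinearMap.smul_apply, smul_eq_mul]
      rfl
    have hΦs : ∀ (c : A ⧸ p) (x : (A ⧸ p) ⊗[F] M), Φ (c • x) = c * Φ x := by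
      intro c x
      induction x using TensorProduct.induction_on with
      | zero => rw [smul_zero, map_zero, mul_zero]
      | tmul a m => rw [TensorProduct.smul_tmul', smul_eq_mul, hΦt, hΦt, mul_assoc]
      | add x y hx hy => rw [smul_add, map_add, map_add, hx, hy, mul_add]
    refine ⟨Φ, hΦs, ?_, ?_⟩
    · rw [map_neg, map_sum]
      have hterm : ∀ x : (A ⧸ p)ˣ,
          Φ ((σ ((x : A ⧸ p)))⁻¹ ⊗ₜ[F] (ψ j) ((x : A ⧸ p))) = 1 := by
        intro x
        rw [hΦt, hfj]
        exact inv_mul_cancel₀ (fun h0 => Units.ne_zero x (hσinj (by rw [h0, map_zero])))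
      rw [Finset.sum_congr rfl (fun x _ => hterm x), Finset.sum_const, Finset.card_univ,
        nsmul_eq_mul, mul_one]
      have hcard : (Fintype.card (A ⧸ p)ˣ : A ⧸ p) = -1 := by
        rw [Fintype.card_units, Nat.cast_sub Fintype.card_pos, Nat.cast_one,
          Nat.cast_card_eq_zero (A ⧸ p), zero_sub]
      rw [hcard, neg_neg]
    · intro i hij
      rw [map_neg, map_sum]
      have hterm : ∀ x : (A ⧸ p)ˣ,
          Φ ((σ ((x : A ⧸ p)))⁻¹ ⊗ₜ[F] (ψ i) ((x : A ⧸ p))) = 0 := by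
        intro x
        rw [hΦt, hfi i hij, map_zero, mul_zero]
      rw [Finset.sum_congr rfl (fun x _ => hterm x), Finset.sum_const, smul_zero, neg_zero]
  -- conclusion
  rw [linearIndependent_iff']
  intro s g hsum j hj
  obtain ⟨Φ, hΦs, hΦj, hΦi⟩ := keyΦ j
  have h0 : Φ (∑ i ∈ s, g i • (- ∑ x : (A ⧸ p)ˣ,
      (σ ((x : A ⧸ p)))⁻¹ ⊗ₜ[F] (ψ i) ((x : A ⧸ p)) : (A ⧸ p) ⊗[F] M)) = 0 := by
    rw [hsum, map_zero]
  rw [map_sum] at h0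
  have h1 : ∀ i ∈ s, Φ (g i • (- ∑ x : (A ⧸ p)ˣ,
      (σ ((x : A ⧸ p)))⁻¹ ⊗ₜ[F] (ψ i) ((x : A ⧸ p)) : (A ⧸ p) ⊗[F] M)) =
      if i = j then g j else 0 := by
    intro i _
    rw [hΦs]
    by_cases hij : i = j
    · subst hij; rw [hΦj, mul_one, if_pos rfl]
    · rw [hΦi i hij, mul_zero, if_neg hij]
  rw [Finset.sum_congr rfl h1, Finset.sum_ite_eq' s j (fun _ => g j), if_pos hj] at h0
  exact h0
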